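/- Let c be a colouring of E_n by m upsets. Suppose level L^i of E_n realizes at most k ≤ 2^n distinct ∼^{c}_ω-types, and all elements of level L^{i+1} have the same 0-type over c (belong to exactly the same colour upsets). Then level L^{i+1} realizes at most k distinct ∼^c_ω-types. -/

import Mathlib

def EnC (n : ℕ) : Type := Option {p : ℕ × ℕ // p.1 ≤ 2 ^ n}
def EnPt (n : ℕ) (l i : ℕ) (h : l ≤ 2 ^ n) : EnC n := some ⟨(l, i), h⟩
def EnInf (n : ℕ) : EnC n := none
def EnLe {n : ℕ} : EnC n → EnC n → Prop
  | none, _ => True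
  | some _, none => False
  | some p, some q =>
      p.1 = q.1 ∨ (p.1.2 = q.1.2 + 1 ∧ q.1.1 ≠ p.1.1 + 1) ∨ q.1.2 + 2 ≤ p.1.2

instance (n : ℕ) : PartialOrder (EnC n) where
  le := EnLe
  le_refl a := by cases a with
    | none => trivial
    | some p => exact Or.inl rfl
  le_trans a b c hab hbc := by
    cases a with
    | none => trivial
    | some p =>
      cases b with
      | none => simp only [EnLe] at hab
      | some q =>
        cases c with
        | none => simp only [EnLe] at hbc
        | some r =>
          simp only [EnLe] at *
          rcases hab with h1 | h1 | h1 <;> rcases hbc with h2 | h2 | h2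
          · exact Or.inl (h1.trans h2)
          · rw [h1]; exact Or.inr (Or.inl h2)
          · rw [h1]; exact Or.inr (Or.inr h2)
          · rw [← h2]; exact Or.inr (Or.inl h1)
          · exact Or.inr (Or.inr (by omega))
          · exact Or.inr (Or.inr (by omega))
          · rw [← h2]; exact Or.inr (Or.inr h1)
          · exact Or.inr (Or.inr (by omega))
          · exact Or.inr (Or.inr (by omega))
  le_antisymm a b hab hba := by
    cases a with
    | none => cases b with
      | none => rfl
      | some q => simp only [EnLe] at hba
    | some p =>
      cases b with
      | none => simp only [EnLe] at hab
      | some q =>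
        simp only [EnLe] at hab hba
        congr 1
        exact Subtype.ext (by rcases hab with h | h | h <;> rcases hba with h' | h' | h' <;>
          first | exact h | exact h'.symm | omega)

def EnLevel (n j : ℕ) : Set (EnC n) := {p | ∃ (l : ℕ) (h : l ≤ 2 ^ n), p = EnPt n l j h}
def simRel {α : Type*} [Preorder α] (G : Set (Set α)) : ℕ → α → α → Prop
  | 0 => fun x y => ∀ g ∈ G, (x ∈ g ↔ y ∈ g)
  | m + 1 => fun x y =>
      (∀ z, x ≤ z → ∃ w, y ≤ w ∧ simRel G m z w) ∧
      (∀ w, y ≤ w → ∃ z, x ≤ z ∧ simRel G m z w)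
def simOmega {α : Type*} [Preorder α] (G : Set (Set α)) (x y : α) : Prop :=
  ∀ m, simRel G m x y
def enTypes {n : ℕ} (G : Set (Set (EnC n))) (S : Set (EnC n)) : Set (Set (EnC n)) :=
  {T | ∃ p ∈ S, T = {q | simOmega G p q}}

section Basic
variable {α : Type*} [Preorder α] (G : Set (Set α))

lemma simRel_refl : ∀ (m : ℕ) (x : α), simRel G m x x := by
  intro m
  induction m with
  | zero => intro x; simp [simRel]
  | succ m ih => exact fun x => ⟨fun z hz => ⟨z, hz, ih z⟩, fun w hw => ⟨w, hw, ih w⟩⟩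

lemma simRel_symm : ∀ (m : ℕ) {x y : α}, simRel G m x y → simRel G m y x := by
  intro m
  induction m with
  | zero => intro x y h g hg; exact (h g hg).symm
  | succ m ih =>
    rintro x y ⟨h1, h2⟩
    exact ⟨fun z hz => (h2 z hz).imp (fun w ⟨hw, hs⟩ => ⟨hw, ih hs⟩),
           fun w hw => (h1 w hw).imp (fun z ⟨hz, hs⟩ => ⟨hz, ih hs⟩)⟩

lemma simRel_trans : ∀ (m : ℕ) {x y z : α}, simRel G m x y → simRel G m y z → simRel G m x z := by
  intro m
  induction m with
  | zero => intro x y z h h' g hg; exact (h g hg).trans (h' g hg)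
  | succ m ih =>
    rintro x y z ⟨h1, h2⟩ ⟨h1', h2'⟩
    constructor
    · intro a ha
      obtain ⟨b, hb, hab⟩ := h1 a ha
      obtain ⟨c, hc, hbc⟩ := h1' b hb
      exact ⟨c, hc, ih hab hbc⟩
    · intro a ha
      obtain ⟨b, hb, hab⟩ := h2' a ha
      obtain ⟨c, hc, hbc⟩ := h2 b hb
      exact ⟨c, hc, ih hbc hab⟩

lemma simOmega_refl (x : α) : simOmega G x x := fun m => simRel_refl G m x

lemma typeOf_eq {x y : α} (h : simOmega G x y) :
    {q | simOmega G x q} = {q | simOmega G y q} := by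
  ext r
  constructor
  · intro hr m; exact simRel_trans G m (simRel_symm G m (h m)) (hr m)
  · intro hr m; exact simRel_trans G m (h m) (hr m)

end Basic

section Main
variable {n : ℕ} (G : Set (Set (EnC n)))

/-- the ω-type of `x^l_i`, as a function of `l` (junk value for `l > 2^n`). -/
noncomputable def tpAt (i l : ℕ) : Set (EnC n) :=
  if h : l ≤ 2 ^ n then {q | simOmega G (EnPt n l i h) q} else ∅

/-- the set of level-`i` ω-types seen from `x^l_{i+1}`. -/
def SeenSet (i l : ℕ) : Set (Set (EnC n)) :=
  {T | ∃ (j : ℕ) (hj : j ≤ 2 ^ n), j ≠ l + 1 ∧ T = {q | simOmega G (EnPt n j i hj) q}}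

lemma tpAt_eq' (i l : ℕ) (h : l ≤ 2 ^ n) :
    tpAt G i l = {q | simOmega G (EnPt n l i h) q} := dif_pos h

lemma enTypes_level (i : ℕ) :
    enTypes G (EnLevel n i) = tpAt G i '' Set.Iic (2 ^ n) := by
  ext T
  constructor
  · rintro ⟨p, ⟨l, hl, rfl⟩, rfl⟩
    exact ⟨l, hl, tpAt_eq' G i l hl⟩
  · rintro ⟨l, hl, rfl⟩
    exact ⟨EnPt n l i hl, ⟨l, hl, rfl⟩, tpAt_eq' G i l hl⟩

lemma mem_level (i l : ℕ) (h : l ≤ 2 ^ n) : EnPt n l i h ∈ EnLevel n i := ⟨l, h, rfl⟩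

lemma le_EnPt {l i : ℕ} {h : l ≤ 2 ^ n} {z : EnC n} (hz : EnPt n l (i+1) h ≤ z) :
    z = EnPt n l (i+1) h ∨
    (∃ (j : ℕ) (hj : j ≤ 2 ^ n), j ≠ l + 1 ∧ z = EnPt n j i hj) ∨
    (∃ p : {p : ℕ × ℕ // p.1 ≤ 2 ^ n}, z = some p ∧ p.1.2 + 2 ≤ i + 1) := by
  cases z with
  | none => exact (hz : False).elim
  | some q =>
    have hz' : EnLe (EnPt n l (i+1) h) (some q) := hz
    simp only [EnPt, EnLe] at hz'
    rcases hz' with h1 | ⟨h1, h2⟩ | h1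
    · refine Or.inl ?_
      unfold EnPt
      congr 1
      exact Subtype.ext h1.symm
    · refine Or.inr (Or.inl ⟨q.1.1, q.2, by simpa using h2, ?_⟩)
      unfold EnPt
      congr 1
      refine Subtype.ext ?_
      rw [Prod.ext_iff]
      exact ⟨rfl, by simp at h1 ⊢; omega⟩
    · exact Or.inr (Or.inr ⟨q, rfl, h1⟩)

lemma EnPt_le_level_i {l' j i : ℕ} (hl' : l' ≤ 2 ^ n) (hj : j ≤ 2 ^ n) (hne : j ≠ l' + 1) :
    EnPt n l' (i+1) hl' ≤ EnPt n j i hj := by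
  exact Or.inr (Or.inl ⟨rfl, hne⟩)

lemma EnPt_le_low {l' i : ℕ} (hl' : l' ≤ 2 ^ n) (p : {p : ℕ × ℕ // p.1 ≤ 2 ^ n})
    (hp : p.1.2 + 2 ≤ i + 1) : EnPt n l' (i+1) hl' ≤ some p := by
  exact Or.inr (Or.inr hp)

lemma half (i : ℕ) {l l' : ℕ} (hl : l ≤ 2 ^ n) (hl' : l' ≤ 2 ^ n)
    (hS : SeenSet G i l = SeenSet G i l') (m : ℕ)
    (hrec : simRel G m (EnPt n l (i+1) hl) (EnPt n l' (i+1) hl')) :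
    ∀ z, EnPt n l (i+1) hl ≤ z → ∃ w, EnPt n l' (i+1) hl' ≤ w ∧ simRel G m z w := by
  intro z hz
  rcases le_EnPt hz with rfl | ⟨j, hj, hne, rfl⟩ | ⟨p, rfl, hp⟩
  · exact ⟨EnPt n l' (i+1) hl', le_refl _, hrec⟩
  · have hmem : {q | simOmega G (EnPt n j i hj) q} ∈ SeenSet G i l := ⟨j, hj, hne, rfl⟩
    rw [hS] at hmem
    obtain ⟨j', hj', hne', hT⟩ := hmem
    refine ⟨EnPt n j' i hj', EnPt_le_level_i hl' hj' hne', ?_⟩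
    have : EnPt n j' i hj' ∈ {q | simOmega G (EnPt n j i hj) q} := by
      rw [hT]; exact simOmega_refl G _
    exact this m
  · exact ⟨some p, EnPt_le_low hl' p hp, simRel_refl G m _⟩

lemma key (i : ℕ) {l l' : ℕ} (hl : l ≤ 2 ^ n) (hl' : l' ≤ 2 ^ n)
    (hS : SeenSet G i l = SeenSet G i l')
    (h00 : simRel G 0 (EnPt n l (i+1) hl) (EnPt n l' (i+1) hl')) :
    simOmega G (EnPt n l (i+1) hl) (EnPt n l' (i+1) hl') := by
  intro m
  induction m with
  | zero => exact h00
  | succ m ih =>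
    refine ⟨half G i hl hl' hS m ih, fun w hw => ?_⟩
    obtain ⟨z, hz, hs⟩ := half G i hl' hl hS.symm m (simRel_symm G m ih) w hw
    exact ⟨z, hz, simRel_symm G m hs⟩

end Main

theorem EnLevel_succ_types_le (n m k i : ℕ) (c : Fin m → Set (EnC n))
    (hc : ∀ j, IsUpperSet (c j)) (hk : k ≤ 2 ^ n)
    (hi : (enTypes (Set.range c) (EnLevel n i)).encard ≤ (k : ℕ∞))
    (h0 : ∀ p ∈ EnLevel n (i + 1), ∀ q ∈ EnLevel n (i + 1),
      simRel (Set.range c) 0 p q) :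
    (enTypes (Set.range c) (EnLevel n (i + 1))).encard ≤ (k : ℕ∞) := by
  classical
  set G := Set.range c with hG
  set C := enTypes G (EnLevel n i) with hC
  -- encard of Iic (2^n)
  have hIic : (Set.Iic (2 ^ n) : Set ℕ).encard = (2 ^ n + 1 : ℕ) := by
    rw [show (Set.Iic (2 ^ n) : Set ℕ) = ↑(Finset.Iic (2 ^ n)) by simp]
    rw [Set.encard_coe_eq_coe_finsetCard, Nat.card_Iic]
  -- pigeonhole on level i
  have hpig : ∃ a b : ℕ, a ≤ 2 ^ n ∧ b ≤ 2 ^ n ∧ a ≠ b ∧ tpAt G i a = tpAt G i b := by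
    by_contra hcon
    push_neg at hcon
    have hinj : Set.InjOn (tpAt G i) (Set.Iic (2 ^ n)) := by
      intro a ha b hb hab
      by_contra hne
      exact hcon a b ha hb hne hab
    have := hinj.encard_image
    rw [← enTypes_level, hIic] at this
    rw [← hC] at this
    have h1 : ((2 ^ n + 1 : ℕ) : ℕ∞) ≤ (k : ℕ∞) := this ▸ hi
    have := Nat.cast_le.mp h1
    omega
  obtain ⟨a, b, ha, hb, hab, hd⟩ := hpig
  set d : Set (EnC n) := tpAt G i a with hdd
  have hdC : d ∈ C := by rw [hC, enTypes_level]; exact ⟨a, ha, rfl⟩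
  -- every type at level i is tpAt
  have htpAt : ∀ j (hj : j ≤ 2 ^ n), tpAt G i j = {q | simOmega G (EnPt n j i hj) q} := by
    intro j hj; simp [tpAt, hj]
  -- d is in every SeenSet
  have hdSeen : ∀ l, d ∈ SeenSet G i l := by
    intro l
    rcases ne_or_eq a (l + 1) with h | h
    · exact ⟨a, ha, h, by rw [← htpAt a ha]⟩
    · refine ⟨b, hb, by omega, ?_⟩
      rw [← htpAt b hb]; exact hd
  -- SeenSet is contained in C and characterization
  have hSeenC : ∀ l, SeenSet G i l ⊆ C := by
    rintro l T ⟨j, hj, hne, rfl⟩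
    rw [hC, enTypes_level]
    exact ⟨j, hj, (htpAt j hj)⟩
  -- every SeenSet is C or C minus a singleton ≠ d
  have hSeenCases : ∀ l ∈ Set.Iic (2 ^ n),
      SeenSet G i l ∈ insert C ((fun t => C \ {t}) '' (C \ {d})) := by
    intro l _
    rcases eq_or_ne (SeenSet G i l) C with h | h
    · exact Or.inl h
    · obtain ⟨T, hTC, hTn⟩ : ∃ T, T ∈ C ∧ T ∉ SeenSet G i l := by
        by_contra hcc
        push_neg at hcc
        exact h (Set.Subset.antisymm (hSeenC l) hcc)
      obtain ⟨j₀, hj₀, hT⟩ : ∃ (j₀ : ℕ) (hj₀ : j₀ ≤ 2 ^ n), T = tpAt G i j₀ := by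
        rw [hC, enTypes_level] at hTC
        obtain ⟨j₀, hj₀, hT⟩ := hTC
        exact ⟨j₀, hj₀, hT.symm⟩
      have hj₀eq : j₀ = l + 1 := by
        by_contra hne
        exact hTn ⟨j₀, hj₀, hne, by rw [hT, htpAt j₀ hj₀]⟩
      refine Or.inr ⟨T, ⟨hTC, ?_⟩, ?_⟩
      · intro hTd
        exact hTn (hTd ▸ hdSeen l)
      · -- C \ {T} = SeenSet G i l
        show C \ {T} = SeenSet G i l
        refine (Set.Subset.antisymm ?_ ?_).symm
        · rintro S hS
          refine ⟨hSeenC l hS, ?_⟩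
          intro hST
          simp only [Set.mem_singleton_iff] at hST
          exact hTn (hST ▸ hS)
        · rintro S ⟨hSC, hSne⟩
          simp only [Set.mem_singleton_iff] at hSne
          rw [hC, enTypes_level] at hSC
          obtain ⟨j, hj, hS⟩ := hSC
          have hjne : j ≠ l + 1 := by
            intro hje
            apply hSne
            rw [← hS, hT, hje, hj₀eq]
          exact ⟨j, hj, hjne, by rw [← hS, htpAt j hj]⟩
  -- choice function from SeenSets back to level i+1 types
  set F : ℕ → Set (EnC n) := tpAt G (i + 1) with hF
  set φ : Set (Set (EnC n)) → Set (EnC n) := fun S =>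
    if h : ∃ l, l ≤ 2 ^ n ∧ SeenSet G i l = S then F h.choose else ∅ with hφ
  have hφF : ∀ l ∈ Set.Iic (2 ^ n), F l = φ (SeenSet G i l) := by
    intro l hl
    have hex : ∃ l', l' ≤ 2 ^ n ∧ SeenSet G i l' = SeenSet G i l := ⟨l, hl, rfl⟩
    rw [hφ]
    simp only [dif_pos hex]
    obtain ⟨hl', hSeq⟩ := hex.choose_spec
    set l' := hex.choose
    have hkey := key G i hl' hl hSeq
      (h0 _ (mem_level (i+1) l' hl') _ (mem_level (i+1) l hl))
    rw [hF, tpAt_eq' G (i+1) l hl, tpAt_eq' G (i+1) l' hl']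
    exact (typeOf_eq G hkey).symm
  have himg : enTypes G (EnLevel n (i+1)) = φ '' (SeenSet G i '' Set.Iic (2 ^ n)) := by
    rw [enTypes_level, ← Set.image_comp]
    exact Set.image_congr hφF
  rw [himg]
  have hsub : SeenSet G i '' Set.Iic (2 ^ n) ⊆
      insert C ((fun t => C \ {t}) '' (C \ {d})) := by
    rintro S ⟨l, hl, rfl⟩
    exact hSeenCases l hl
  calc (φ '' (SeenSet G i '' Set.Iic (2 ^ n))).encard
      ≤ (SeenSet G i '' Set.Iic (2 ^ n)).encard := Set.encard_image_le _ _
    _ ≤ (insert C ((fun t => C \ {t}) '' (C \ {d}))).encard := Set.encard_le_encard hsub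
    _ ≤ ((fun t => C \ {t}) '' (C \ {d})).encard + 1 := Set.encard_insert_le _ _
    _ ≤ (C \ {d}).encard + 1 := add_le_add_left (Set.encard_image_le _ _) 1
    _ = C.encard := Set.encard_diff_singleton_add_one hdC
    _ ≤ (k : ℕ∞) := hi
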